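/- Let k be a field and A a commutative k-algebra that is an integral domain. Let F : ℕ → Submodule k A be a filtration satisfying: F is monotone; 1 ∈ F 0; F m · F n ≤ F (m+n) for all m, n; and ⋃ₙ F n = A. Let R_F ⊆ A[t] be the Rees algebra, i.e. the k-subalgebra of the polynomial ring A[t] consisting of polynomials p such that the coefficient of tⁿ in p lies in F n for every n. Then t ∈ R_F, and R_F is flat as a module over the polynomial ring k[t] (via the k-algebra map k[t] → R_F sending t to t). -/

import Mathlib

open Polynomial TensorProduct

/-- `A[t]` is an algebra over `k[t]` via the map sending `t` to `t`
(i.e. `Polynomial.map (algebraMap k A)`). -/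
noncomputable instance polyPolyAlgebra (k A : Type*) [CommRing k] [CommRing A] [Algebra k A] :
    Algebra (Polynomial k) (Polynomial A) :=
  (Polynomial.mapRingHom (algebraMap k A)).toAlgebra

/-- A torsion-free module over a PID is flat. -/
theorem flat_of_noZeroSMulDivisors_of_pid (R M : Type*) [CommRing R] [IsDomain R]
    [IsPrincipalIdealRing R] [AddCommGroup M] [Module R M] [NoZeroSMulDivisors R M] :
    Module.Flat R M := by
  rw [Module.Flat.iff_rTensor_injective']
  intro I
  obtain ⟨a, rfl⟩ := (IsPrincipalIdealRing.principal I).principal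
  rcases eq_or_ne a 0 with rfl | ha
  · rw [show Submodule.span R {(0 : R)} = (⊥ : Ideal R) from Submodule.span_zero_singleton R]
    haveI : Subsingleton ((⊥ : Ideal R) ⊗[R] M) := inferInstance
    intro x y _
    exact Subsingleton.elim x y
  · have hmem : a ∈ Submodule.span R {a} := Submodule.subset_span rfl
    set f : R →ₗ[R] (Submodule.span R {a} : Ideal R) :=
      LinearMap.toSpanSingleton R _ ⟨a, hmem⟩ with hf
    have hfbij : Function.Bijective f := by
      constructor
      · intro x y hxy
        have : x • a = y • a := congrArg Subtype.val hxy
        simpa [smul_eq_mul] using mul_right_cancel₀ ha (by simpa [smul_eq_mul] using this)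
      · rintro ⟨b, hb⟩
        obtain ⟨r, rfl⟩ := Submodule.mem_span_singleton.mp hb
        exact ⟨r, by simp [hf, LinearMap.toSpanSingleton_apply, smul_eq_mul]⟩
    have hcomp : (Submodule.span R {a} : Ideal R).subtype ∘ₗ f = a • LinearMap.id := by
      ext r
      simp [hf, LinearMap.toSpanSingleton_apply, smul_eq_mul, mul_comm]
    have hsurj : Function.Surjective (LinearMap.rTensor M f) :=
      LinearMap.rTensor_surjective M hfbij.2
    have hinj2 : Function.Injective
        (LinearMap.rTensor M ((Submodule.span R {a} : Ideal R).subtype) ∘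
          LinearMap.rTensor M f) := by
      rw [← LinearMap.coe_comp, ← LinearMap.rTensor_comp, hcomp]
      intro x y hxy
      simp only [LinearMap.rTensor_smul, LinearMap.rTensor_id, LinearMap.smul_apply,
        LinearMap.id_apply] at hxy
      have h2 := congrArg (TensorProduct.lid R M) hxy
      simp only [map_smul] at h2
      exact (TensorProduct.lid R M).injective (smul_right_injective M ha h2)
    intro x y hxy
    obtain ⟨x', rfl⟩ := hsurj x
    obtain ⟨y', rfl⟩ := hsurj y
    exact congrArg _ (hinj2 hxy)

/-- The Rees algebra of a filtration, as a subalgebra of `A[t]` over `k[t]`. -/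
def reesSubalgebra (k A : Type*) [CommRing k] [CommRing A] [Algebra k A]
    (F : ℕ → Submodule k A) (hmono : Monotone F) (hone : (1 : A) ∈ F 0)
    (hmul : ∀ m n, F m * F n ≤ F (m + n)) :
    Subalgebra (Polynomial k) (Polynomial A) where
  carrier := {p : Polynomial A | ∀ n, p.coeff n ∈ F n}
  mul_mem' := by
    intro p q hp hq n
    rw [Polynomial.coeff_mul]
    refine Submodule.sum_mem _ ?_
    rintro ⟨i, j⟩ hij
    have hij' : i + j = n := Finset.HasAntidiagonal.mem_antidiagonal.mp hij
    exact hij' ▸ hmul i j (Submodule.mul_mem_mul (hp i) (hq j))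
  add_mem' := by
    intro p q hp hq n
    simpa [Polynomial.coeff_add] using (F n).add_mem (hp n) (hq n)
  algebraMap_mem' := by
    intro q n
    have : algebraMap (Polynomial k) (Polynomial A) q = q.map (algebraMap k A) := rfl
    rw [this, Polynomial.coeff_map, Algebra.algebraMap_eq_smul_one]
    exact hmono (Nat.zero_le n) ((F 0).smul_mem _ hone)

/-- Let `F` be an increasing, exhaustive, multiplicative filtration of an integral domain `A`
over a field `k`, with `1 ∈ F 0`.  The Rees algebra `R_F = {p ∈ A[t] | coeff n p ∈ F n}`
contains `t` and is flat over `k[t]` (where `k[t]` acts on `A[t]` via `t ↦ t`). -/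
theorem rees_algebra_flat (k A : Type*) [Field k] [CommRing A] [IsDomain A] [Algebra k A]
    (F : ℕ → Submodule k A) (hmono : Monotone F) (hone : (1 : A) ∈ F 0)
    (hmul : ∀ m n, F m * F n ≤ F (m + n)) (hexh : ∀ a : A, ∃ n, a ∈ F n) :
    ∃ R : Subalgebra (Polynomial k) (Polynomial A),
      (R : Set (Polynomial A)) = {p : Polynomial A | ∀ n, p.coeff n ∈ F n} ∧
      (Polynomial.X : Polynomial A) ∈ R ∧
      Module.Flat (Polynomial k) R := by
  have halg : ∀ q : Polynomial k,
      algebraMap (Polynomial k) (Polynomial A) q = q.map (algebraMap k A) := fun q => rfl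
  have hinj : Function.Injective (algebraMap (Polynomial k) (Polynomial A)) := by
    intro p q h
    rw [halg, halg] at h
    exact Polynomial.map_injective _ (algebraMap k A).injective h
  haveI : NoZeroSMulDivisors (Polynomial k) (reesSubalgebra k A F hmono hone hmul) := by
    refine ⟨fun {c x} h => ?_⟩
    rcases eq_or_ne c 0 with rfl | hc
    · exact Or.inl rfl
    · refine Or.inr ?_
      have h' : c • (x : Polynomial A) = 0 := by
        have := congrArg (Subtype.val) h
        simpa using this
      rw [Algebra.smul_def] at h'
      rcases mul_eq_zero.mp h' with h'' | h''
      · exact absurd (hinj (by simpa using h'')) hc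
      · exact Subtype.ext h''
  refine ⟨reesSubalgebra k A F hmono hone hmul, rfl, ?_,
    flat_of_noZeroSMulDivisors_of_pid _ _⟩
  intro n
  rcases eq_or_ne n 1 with rfl | hn
  · simpa using hmono (Nat.zero_le 1) hone
  · simp [Polynomial.coeff_X, Ne.symm hn]
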